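/- For every natural number n, det [ 4^{i+j+1} − C(2(i+j)+3, i+j+1) ]_{0 ≤ i,j ≤ n} = (−1)^n · (2n² + 4n + 1). Equivalently, since a_k(2) = 4^{k+1} − C(2k+3, k+1), the Hankel determinant H_n(x) evaluated at x = 2 equals (−1)^n (2n² + 4n + 1). -/

import Mathlib

open Polynomial

/-- `a k` is the polynomial `∑_{m=0}^{k} C(2k+2-m, k-m) xᵐ`. -/
noncomputable def a (k : ℕ) : ℚ[X] :=
  ∑ m ∈ Finset.range (k + 1), C (((2 * k + 2 - m).choose (k - m) : ℚ)) * X ^ m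

/-- `H n` is the `(n+1)×(n+1)` Hankel determinant of the polynomials `a`. -/
noncomputable def H (n : ℕ) : ℚ[X] :=
  (Matrix.of fun i j : Fin (n + 1) => a (i.val + j.val)).det

open Finset

namespace HK


/-- pull-down: `(j+1-t) * C(2j+3, j+1-t) = (2j+3) * C(2j+2, j-t)` for `t ≤ j`. -/
lemma pull (j t : ℕ) (h : t ≤ j) :
    (j + 1 - t) * (2 * j + 3).choose (j + 1 - t) = (2 * j + 3) * (2 * j + 2).choose (j - t) := by
  have h1 := Nat.add_one_mul_choose_eq (2 * j + 2) (j - t)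
  have e1 : 2 * j + 2 + 1 = 2 * j + 3 := rfl
  have e2 : j - t + 1 = j + 1 - t := by omega
  rw [e1, e2] at h1
  rw [mul_comm ((2 * j + 3).choose (j + 1 - t)) (j + 1 - t)] at h1
  exact h1.symm

lemma pascal (N s : ℕ) : (N + 1).choose (s + 1) = N.choose s + N.choose (s + 1) :=
  Nat.choose_succ_succ' N s

/-- raise (ballot): in ℚ, `(2j+3)*(C(2j+2,j+1-u) - C(2j+2,j-u)) = (2u+1)*C(2j+3,j+1-u)` for `u ≤ j`. -/
lemma ballot (j u : ℕ) (h : u ≤ j) :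
    (2 * (j : ℚ) + 3) * ((2 * j + 2).choose (j + 1 - u) : ℚ)
      - (2 * (j : ℚ) + 3) * ((2 * j + 2).choose (j - u) : ℚ)
      = (2 * (u : ℚ) + 1) * ((2 * j + 3).choose (j + 1 - u) : ℚ) := by
  have e : j + 1 - u = (j - u) + 1 := by omega
  have hp : (2 * j + 3).choose (j + 1 - u)
      = (2 * j + 2).choose (j - u) + (2 * j + 2).choose (j + 1 - u) := by
    rw [e]
    have e2 : 2 * j + 3 = (2 * j + 2) + 1 := by ring
    rw [e2]
    exact pascal (2 * j + 2) (j - u)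
  have hs : (2 * j + 2).choose (j + 1 - u) * (j + 1 - u)
      = (2 * j + 2).choose (j - u) * (j + u + 2) := by
    rw [e, Nat.choose_succ_right_eq]
    congr 1
    omega
  have hp' : ((2 * j + 3).choose (j + 1 - u) : ℚ)
      = ((2 * j + 2).choose (j - u) : ℚ) + ((2 * j + 2).choose (j + 1 - u) : ℚ) := by
    exact_mod_cast congrArg (Nat.cast : ℕ → ℚ) hp
  have hs' : ((2 * j + 2).choose (j + 1 - u) : ℚ) * ((j : ℚ) + 1 - u)
      = ((2 * j + 2).choose (j - u) : ℚ) * ((j : ℚ) + u + 2) := by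
    have hc := congrArg (Nat.cast : ℕ → ℚ) hs
    push_cast at hc
    have eu : ((j + 1 - u : ℕ) : ℚ) = (j : ℚ) + 1 - u := by
      have hu : u ≤ j + 1 := by omega
      push_cast [hu]
      ring
    rw [eu] at hc
    exact hc
  nlinarith [hp', hs']

/-- odd halfway sum, cast to ℚ -/
lemma halfodd (j : ℕ) :
    ∑ m ∈ range (j + 2), ((2 * j + 3).choose m : ℚ) = 4 ^ (j + 1) := by
  have h := Nat.sum_range_choose_halfway (j + 1)
  have e : 2 * (j + 1) + 1 = 2 * j + 3 := by ring
  rw [e] at h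
  have hc := congrArg (Nat.cast : ℕ → ℚ) h
  push_cast at hc
  exact hc

/-- even halfway: `2 * ∑_{m≤j} C(2j+2,m) + C(2j+2,j+1) = 4^(j+1)` in ℚ. -/
lemma halfeven (j : ℕ) :
    2 * (∑ m ∈ range (j + 1), ((2 * j + 2).choose m : ℚ)) + ((2 * j + 2).choose (j + 1) : ℚ)
      = 4 ^ (j + 1) := by
  have h1 : ∑ m ∈ range (2 * j + 3), (2 * j + 2).choose m = 2 ^ (2 * j + 2) :=
    Nat.sum_range_choose (2 * j + 2)
  have hsplit : (∑ m ∈ Ico 0 (j + 2), (2 * j + 2).choose m)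
      + (∑ m ∈ Ico (j + 2) (2 * j + 3), (2 * j + 2).choose m)
      = ∑ m ∈ Ico 0 (2 * j + 3), (2 * j + 2).choose m :=
    Finset.sum_Ico_consecutive _ (by omega) (by omega)
  rw [← range_eq_Ico, ← range_eq_Ico] at hsplit
  have h2 : ∑ m ∈ Ico (j + 2) (2 * j + 3), (2 * j + 2).choose m
      = ∑ k ∈ range (j + 1), (2 * j + 2).choose (j + 2 + k) := by
    rw [Finset.sum_Ico_eq_sum_range, show 2 * j + 3 - (j + 2) = j + 1 from by omega]
  have h3 : ∀ k ∈ range (j + 1), (2 * j + 2).choose (j + 2 + k) = (2 * j + 2).choose (j - k) := by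
    intro k hk
    simp only [mem_range] at hk
    have h4 : j + 2 + k ≤ 2 * j + 2 := by omega
    have h5 := Nat.choose_symm h4
    have e : 2 * j + 2 - (j + 2 + k) = j - k := by omega
    rw [e] at h5
    exact h5.symm
  have h6 : ∑ k ∈ range (j + 1), (2 * j + 2).choose (j - k)
      = ∑ m ∈ range (j + 1), (2 * j + 2).choose m := by
    have h := Finset.sum_range_reflect (fun m => (2 * j + 2).choose m) (j + 1)
    simpa using h
  have h7 : ∑ m ∈ range (j + 2), (2 * j + 2).choose m
      = (∑ m ∈ range (j + 1), (2 * j + 2).choose m) + (2 * j + 2).choose (j + 1) :=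
    Finset.sum_range_succ _ _
  -- assemble in ℕ : S + c + S = 2^(2j+2)
  have hN : (∑ m ∈ range (j + 1), (2 * j + 2).choose m) + (2 * j + 2).choose (j + 1)
      + (∑ m ∈ range (j + 1), (2 * j + 2).choose m) = 2 ^ (2 * j + 2) := by
    rw [Finset.sum_congr rfl h3] at h2
    rw [h6] at h2
    rw [h7, h2] at hsplit
    rw [hsplit]
    exact h1
  have hc := congrArg (Nat.cast : ℕ → ℚ) hN
  push_cast at hc
  have e4 : (2 : ℚ) ^ (2 * j + 2) = 4 ^ (j + 1) := by
    rw [show 2 * j + 2 = 2 * (j + 1) by ring, pow_mul]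
    norm_num
  rw [e4] at hc
  linarith

lemma twot1 (t : ℕ) : (2 * (t : ℚ) + 1) ≠ 0 := by positivity
lemma twot3 (t : ℕ) : (2 * (t : ℚ) + 3) ≠ 0 := by positivity
lemma jp1 (j : ℕ) : ((j : ℚ) + 1) ≠ 0 := by positivity

/-- the core sum identity (G') -/
lemma keyG (j : ℕ) :
    ∑ t ∈ range (j + 1),
      ((t : ℚ) + 1) ^ 2 * ((2 * j + 2).choose (j - t) : ℚ) / ((2 * t + 1) * (2 * t + 3))
      = 4 ^ j * ((j : ℚ) + 1) / (2 * (j : ℚ) + 3) := by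
  classical
  set c : ℕ → ℚ := fun t => ((2 * j + 2).choose (j - t) : ℚ) with hc
  have hsplit : ∀ t : ℕ, ((t : ℚ) + 1) ^ 2 * c t / ((2 * t + 1) * (2 * t + 3))
      = c t / 4 + (c t / (2 * (t : ℚ) + 1)) / 8 - (c t / (2 * (t : ℚ) + 3)) / 8 := by
    intro t
    field_simp
    ring
  rw [Finset.sum_congr rfl (fun t _ => hsplit t)]
  rw [Finset.sum_sub_distrib, Finset.sum_add_distrib]
  rw [← Finset.sum_div, ← Finset.sum_div, ← Finset.sum_div]
  -- notation
  set S : ℚ := ∑ t ∈ range (j + 1), c t with hS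
  set P : ℚ := ∑ t ∈ range (j + 1), c t / (2 * (t : ℚ) + 1) with hP
  set Q : ℚ := ∑ t ∈ range (j + 1), c t / (2 * (t : ℚ) + 3) with hQ
  -- auxiliary functions for the telescoping
  set g : ℕ → ℚ := fun u => (if u ≤ j then ((2 * j + 2).choose (j - u) : ℚ) else 0) / (2 * (u : ℚ) + 1) with hg
  set h : ℕ → ℚ := fun u => ((2 * j + 2).choose (j + 1 - u) : ℚ) / (2 * (u : ℚ) + 1) with hh
  have hPg : P = ∑ u ∈ range (j + 2), g u := by
    rw [Finset.sum_range_succ]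
    have e1 : g (j + 1) = 0 := by simp [hg]
    rw [e1, add_zero]
    apply Finset.sum_congr rfl
    intro t ht
    simp only [mem_range] at ht
    have : t ≤ j := by omega
    simp [hg, this, hc]
  have hQh : Q = (∑ u ∈ range (j + 2), h u) - h 0 := by
    rw [Finset.sum_range_succ']
    have e1 : ∀ t, h (t + 1) = c t / (2 * (t : ℚ) + 3) := by
      intro t
      simp only [hh, hc]
      have e2 : j + 1 - (t + 1) = j - t := by omega
      rw [e2]
      push_cast
      ring_nf
    rw [Finset.sum_congr rfl (fun t _ => e1 t)]
    ring
  have hgh : ∀ u ∈ range (j + 2), g u - h u = -(((2 * j + 3).choose (j + 1 - u) : ℚ)) / (2 * (j : ℚ) + 3) := by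
    intro u hu
    simp only [mem_range] at hu
    by_cases huj : u ≤ j
    · simp only [hg, hh, huj, if_pos]
      have hb := ballot j u huj
      have h1 : (2 * (u : ℚ) + 1) ≠ 0 := twot1 u
      have h2 : (2 * (j : ℚ) + 3) ≠ 0 := twot3 j
      field_simp
      nlinarith [hb]
    · have huj1 : u = j + 1 := by omega
      subst huj1
      simp only [hg, hh]
      rw [if_neg (by omega)]
      have e1 : j + 1 - (j + 1) = 0 := by omega
      rw [e1]
      simp only [Nat.choose_zero_right]
      have h2 : (2 * ((j : ℚ) + 1) + 1) ≠ 0 := by positivity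
      push_cast
      rw [zero_div]
      field_simp
      ring
  have hrefl : ∑ u ∈ range (j + 2), ((2 * j + 3).choose (j + 1 - u) : ℚ) = 4 ^ (j + 1) := by
    have hr := Finset.sum_range_reflect (fun m => ((2 * j + 3).choose m : ℚ)) (j + 2)
    calc ∑ u ∈ range (j + 2), ((2 * j + 3).choose (j + 1 - u) : ℚ)
        = ∑ m ∈ range (j + 2), ((2 * j + 3).choose m : ℚ) := hr
      _ = 4 ^ (j + 1) := halfodd j
  have hsumght : ∑ u ∈ range (j + 2), (g u - h u)
      = -(4 ^ (j + 1)) / (2 * (j : ℚ) + 3) := by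
    rw [Finset.sum_congr rfl hgh, ← Finset.sum_div, Finset.sum_neg_distrib, hrefl]
  have hPQ : P - Q = -(4 ^ (j + 1)) / (2 * (j : ℚ) + 3) + h 0 := by
    rw [hPg, hQh, ← hsumght, Finset.sum_sub_distrib]
    ring
  have hh0 : h 0 = ((2 * j + 2).choose (j + 1) : ℚ) := by
    simp [hh]
  have hSval := halfeven j
  have hSc : S = ∑ m ∈ range (j + 1), ((2 * j + 2).choose m : ℚ) := by
    rw [hS]
    have hr := Finset.sum_range_reflect (fun m => ((2 * j + 2).choose m : ℚ)) (j + 1)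
    simp only [hc]
    exact hr
  -- final assembly
  have hPQ' : P - Q = -(4 ^ (j + 1)) / (2 * (j : ℚ) + 3) + ((2 * j + 2).choose (j + 1) : ℚ) := by
    rw [hPQ, hh0]
  have hs2 : 2 * S + ((2 * j + 2).choose (j + 1) : ℚ) = 4 ^ (j + 1) := by
    rw [hSc]; exact hSval
  have h2j3 : (2 * (j : ℚ) + 3) ≠ 0 := twot3 j
  have e4 : (4 : ℚ) ^ (j + 1) = 4 * 4 ^ j := by ring
  have hc2 : ((2 * j + 2).choose (j + 1) : ℚ) = 4 ^ (j + 1) - 2 * S := by linarith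
  rw [show S / 4 + P / 8 - Q / 8 = S / 4 + (P - Q) / 8 from by ring, hPQ', hc2, e4]
  field_simp
  ring

/-- cast helper -/
lemma cast_sub_q {t j : ℕ} (h : t ≤ j + 1) : ((j + 1 - t : ℕ) : ℚ) = (j : ℚ) + 1 - t := by
  push_cast [h]
  ring

noncomputable def re (t : ℕ) : ℚ := 4 * ((t : ℚ) + 1) / (2 * (t : ℚ) + 3)
noncomputable def ve (t : ℕ) : ℚ := ((t : ℚ) + 1) / (2 * (t : ℚ) + 1)
noncomputable def ue (k j : ℕ) : ℚ :=
  if k ≤ j then (((k + 1) * (j + 1 - k) * ((2 * j + 3).choose (j + 1 - k)) : ℕ) : ℚ)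
      / ((2 * (k : ℚ) + 1) * ((j : ℚ) + 1))
  else 0

lemma ue_zero {k j : ℕ} (h : ¬ k ≤ j) : ue k j = 0 := if_neg h

lemma ue_diag (k : ℕ) : ue k k = (2 * (k : ℚ) + 3) / (2 * (k : ℚ) + 1) := by
  simp only [ue, if_pos (le_refl k), Nat.add_sub_cancel_left, Nat.choose_one_right]
  push_cast
  have h1 : ((k : ℚ) + 1) ≠ 0 := jp1 k
  have h2 : (2 * (k : ℚ) + 1) ≠ 0 := twot1 k
  field_simp

lemma sumRUrange (j : ℕ) :
    ∑ t ∈ range (j + 1), re t * ue t j = 4 ^ (j + 1) := by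
  have hterm : ∀ t ∈ range (j + 1), re t * ue t j
      = (4 * (2 * (j : ℚ) + 3) / ((j : ℚ) + 1))
        * (((t : ℚ) + 1) ^ 2 * ((2 * j + 2).choose (j - t) : ℚ) / ((2 * t + 1) * (2 * t + 3))) := by
    intro t ht
    simp only [mem_range] at ht
    have htj : t ≤ j := by omega
    simp only [ue, re, if_pos htj]
    have hpc := congrArg (Nat.cast : ℕ → ℚ) (pull j t htj)
    push_cast at hpc
    rw [cast_sub_q (by omega : t ≤ j + 1)] at hpc
    push_cast
    rw [cast_sub_q (by omega : t ≤ j + 1)]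
    have h1 : (2 * (t : ℚ) + 1) ≠ 0 := twot1 t
    have h3 : (2 * (t : ℚ) + 3) ≠ 0 := twot3 t
    have h4 : ((j : ℚ) + 1) ≠ 0 := jp1 j
    field_simp
    exact hpc
  rw [Finset.sum_congr rfl hterm, ← Finset.mul_sum, keyG j]
  have h4 : ((j : ℚ) + 1) ≠ 0 := jp1 j
  have h5 : (2 * (j : ℚ) + 3) ≠ 0 := twot3 j
  field_simp
  ring

lemma sumRV (n : ℕ) :
    ∑ t ∈ range (n + 1), re t * ve t = 1 + (2 * (n : ℚ) ^ 2 + 4 * n + 1) / (2 * (n : ℚ) + 3) := by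
  induction n with
  | zero => simp [re, ve]; norm_num
  | succ n ih =>
      rw [Finset.sum_range_succ, ih]
      simp only [re, ve]
      push_cast
      have h1 : (2 * (n : ℚ) + 3) ≠ 0 := twot3 n
      have h2 : (2 * ((n : ℚ) + 1) + 1) ≠ 0 := by positivity
      have h3 : (2 * ((n : ℚ) + 1) + 3) ≠ 0 := by positivity
      field_simp
      ring

lemma prodd (n : ℕ) :
    ∏ k ∈ range (n + 1), ((2 * (k : ℚ) + 3) / (2 * (k : ℚ) + 1)) = 2 * (n : ℚ) + 3 := by
  induction n with
  | zero => norm_num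
  | succ n ih =>
      rw [Finset.prod_range_succ, ih]
      push_cast
      have h1 : (2 * ((n : ℚ) + 1) + 1) ≠ 0 := by positivity
      field_simp
      ring

noncomputable def xe (i k : ℕ) : ℚ := if k ≤ i then ((2 * i + 1).choose (i - k) : ℚ) else 0
noncomputable def te (k j : ℕ) : ℚ := if k ≤ j + 1 then ((2 * j + 3).choose (j + 1 - k) : ℚ) else 0
noncomputable def lel (k t : ℕ) : ℚ :=
  (if t = k then 1 else 0) + (if t + 1 = k then (2 * (k : ℚ) - 1) / (2 * (k : ℚ) + 1) else 0)

lemma sum_split_lel (n k : ℕ) (f : ℕ → ℚ) (hk : k ≤ n) :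
    ∑ t ∈ range (n + 1), lel k t * f t
      = f k + (if 1 ≤ k then (2 * (k : ℚ) - 1) / (2 * (k : ℚ) + 1) * f (k - 1) else 0) := by
  simp only [lel, add_mul, ite_mul, one_mul, zero_mul]
  rw [Finset.sum_add_distrib]
  congr 1
  · rw [Finset.sum_ite_eq' (range (n + 1)) k f]
    simp [Nat.lt_succ_iff, hk]
  · rcases Nat.eq_zero_or_pos k with h0 | h1
    · subst h0
      simp
    · have e : ∀ t, (t + 1 = k) = (t = k - 1) := by
        intro t; apply propext; omega
      simp only [e]
      rw [Finset.sum_ite_eq' (range (n + 1)) (k - 1) (fun t => (2 * (k : ℚ) - 1) / (2 * (k : ℚ) + 1) * f t)]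
      have : k - 1 ∈ range (n + 1) := by simp [Nat.lt_succ_iff]; omega
      rw [if_pos this, if_pos (show 1 ≤ k from h1)]

/-- (E2) : L · v = ones -/
lemma sumLv (n k : ℕ) (hk : k ≤ n) : ∑ t ∈ range (n + 1), lel k t * ve t = 1 := by
  rw [sum_split_lel n k ve hk]
  rcases Nat.eq_zero_or_pos k with h0 | h1
  · subst h0; simp [ve]
  · rw [if_pos (show 1 ≤ k from h1)]
    obtain ⟨k', rfl⟩ : ∃ k', k = k' + 1 := ⟨k - 1, by omega⟩
    have e1 : k' + 1 - 1 = k' := by omega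
    rw [e1]
    simp only [ve]
    push_cast
    have h2 : (2 * (k' : ℚ) + 1) ≠ 0 := twot1 k'
    have h3 : (2 * ((k' : ℚ) + 1) + 1) ≠ 0 := by positivity
    field_simp
    ring

/-- (E1) : L · U = T -/
lemma sumLU (n k j : ℕ) (hk : k ≤ n) : ∑ t ∈ range (n + 1), lel k t * ue t j = te k j := by
  rw [sum_split_lel n k (fun t => ue t j) hk]
  rcases Nat.eq_zero_or_pos k with h0 | h1
  · subst h0
    simp only [if_neg (by omega : ¬ 1 ≤ 0), add_zero, ue, te, if_pos (by omega : (0:ℕ) ≤ j), if_pos (by omega : (0:ℕ) ≤ j + 1)]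
    have e1 : j + 1 - 0 = j + 1 := by omega
    rw [e1]
    push_cast
    have h4 : ((j : ℚ) + 1) ≠ 0 := jp1 j
    field_simp
    ring
  · rw [if_pos (show 1 ≤ k from h1)]
    obtain ⟨k', rfl⟩ : ∃ k', k = k' + 1 := ⟨k - 1, by omega⟩
    have e1 : k' + 1 - 1 = k' := by omega
    rw [e1]
    rcases lt_trichotomy j k' with hj | hj | hj
    · -- j < k' : everything is 0
      rw [ue_zero (by omega), ue_zero (by omega), te, if_neg (by omega)]
      ring
    · -- j = k' : boundary
      subst hj
      rw [ue_zero (by omega), ue_diag j, te, if_pos (by omega)]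
      have e2 : j + 1 - (j + 1) = 0 := by omega
      rw [e2, Nat.choose_zero_right]
      push_cast
      have h2 : (2 * (j : ℚ) + 1) ≠ 0 := twot1 j
      have h3 : (2 * ((j : ℚ) + 1) + 1) ≠ 0 := by positivity
      field_simp
      ring
    · -- main case k' + 1 ≤ j
      have hkj : k' + 1 ≤ j := hj
      simp only [ue, te, if_pos (show k' + 1 ≤ j from hkj), if_pos (show k' ≤ j by omega),
        if_pos (show k' + 1 ≤ j + 1 by omega)]
      have e2 : j + 1 - (k' + 1) = j - k' := by omega
      rw [e2]
      -- step identity : C(2j+3, (j-k')+1) * ((j-k')+1) = C(2j+3, j-k') * (j+k'+3)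
      have hs : (2 * j + 3).choose (j + 1 - k') * (j + 1 - k')
          = (2 * j + 3).choose (j - k') * (j + k' + 3) := by
        have e3 : j + 1 - k' = (j - k') + 1 := by omega
        rw [e3, Nat.choose_succ_right_eq]
        congr 1
        omega
      have hsc := congrArg (Nat.cast : ℕ → ℚ) hs
      push_cast at hsc
      rw [cast_sub_q (by omega : k' ≤ j + 1)] at hsc
      push_cast
      rw [cast_sub_q (by omega : k' ≤ j + 1)]
      have ej : ((j - k' : ℕ) : ℚ) = (j : ℚ) - k' := by push_cast [show k' ≤ j by omega]; ring
      rw [ej]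
      have h2 : (2 * (k' : ℚ) + 1) ≠ 0 := twot1 k'
      have h3 : (2 * ((k' : ℚ) + 1) + 1) ≠ 0 := by positivity
      have h4 : ((j : ℚ) + 1) ≠ 0 := jp1 j
      have hk'j : (k' : ℚ) ≤ (j : ℚ) := by exact_mod_cast (le_of_lt hj)
      have h5 : ((j : ℚ) + 1 - k') ≠ 0 := by linarith
      have hX : ((2 * j + 3).choose (j + 1 - k') : ℚ)
          = ((2 * j + 3).choose (j - k') : ℚ) * ((j : ℚ) + k' + 3) / ((j : ℚ) + 1 - k') := by
        rw [eq_div_iff h5]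
        linear_combination hsc
      rw [hX]
      field_simp
      ring

/-- (E6) : X · ones = u -/
lemma sumX1 (n i : ℕ) (hi : i ≤ n) : ∑ k ∈ range (n + 1), xe i k = 4 ^ i := by
  have hshrink : ∑ k ∈ range (n + 1), xe i k = ∑ k ∈ range (i + 1), xe i k := by
    symm
    apply Finset.sum_subset
    · exact Finset.range_subset_range.2 (by omega)
    · intro k _ hk
      simp only [mem_range, Nat.lt_succ_iff] at hk
      exact if_neg (by omega)
  rw [hshrink]
  have hopen : ∀ k ∈ range (i + 1), xe i k = ((2 * i + 1).choose (i - k) : ℚ) := by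
    intro k hk
    simp only [mem_range, Nat.lt_succ_iff] at hk
    exact if_pos hk
  rw [Finset.sum_congr rfl hopen]
  have hr := Finset.sum_range_reflect (fun m => ((2 * i + 1).choose m : ℚ)) (i + 1)
  have hhw := Nat.sum_range_choose_halfway i
  have hhwc := congrArg (Nat.cast : ℕ → ℚ) hhw
  push_cast at hhwc
  calc ∑ k ∈ range (i + 1), ((2 * i + 1).choose (i - k) : ℚ)
      = ∑ m ∈ range (i + 1), ((2 * i + 1).choose m : ℚ) := hr
    _ = 4 ^ i := hhwc

/-- swap a guarded sum -/
lemma sum_guard_symm (p q : ℕ) (f : ℕ → ℚ) :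
    ∑ m ∈ range (p + 1), (if m ≤ q then f m else 0)
      = ∑ m ∈ range (q + 1), (if m ≤ p then f m else 0) := by
  have h1 : ∀ r s : ℕ, ∑ m ∈ range (r + 1), (if m ≤ s then f m else 0)
      = ∑ m ∈ range (min r s + 1), f m := by
    intro r s
    rw [show ∑ m ∈ range (min r s + 1), f m
        = ∑ m ∈ range (min r s + 1), (if m ≤ s then f m else 0) from
      Finset.sum_congr rfl (fun m hm => by
        simp only [mem_range, Nat.lt_succ_iff] at hm
        rw [if_pos (by omega)])]
    symm
    apply Finset.sum_subset
    · exact Finset.range_subset_range.2 (by omega)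
    · intro m hm hm2
      simp only [mem_range, Nat.lt_succ_iff] at hm hm2
      rw [if_neg (by omega)]
  rw [h1, h1, Nat.min_comm]

/-- (E5) : the Vandermonde-type factorization identity -/
lemma sumXT (n i j : ℕ) (hi : i ≤ n) :
    ∑ k ∈ range (n + 1), xe i k * te k j = ((2 * (i + j) + 3).choose (i + j + 1) : ℚ) := by
  -- shrink to range (i+1)
  have hshrink : ∑ k ∈ range (n + 1), xe i k * te k j = ∑ k ∈ range (i + 1), xe i k * te k j := by
    symm
    apply Finset.sum_subset
    · exact Finset.range_subset_range.2 (by omega)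
    · intro k _ hk
      simp only [mem_range, Nat.lt_succ_iff] at hk
      rw [xe, if_neg (by omega), zero_mul]
  rw [hshrink]
  have hopen : ∀ k ∈ range (i + 1), xe i k * te k j
      = ((2 * i + 1).choose (i - k) : ℚ) * te k j := by
    intro k hk
    simp only [mem_range, Nat.lt_succ_iff] at hk
    rw [xe, if_pos hk]
  rw [Finset.sum_congr rfl hopen]
  -- Vandermonde for the RHS
  have hV : ((2 * (i + j) + 3).choose (i + j + 1) : ℚ)
      = ∑ a ∈ range (i + j + 2), ((2 * i + 1).choose a : ℚ) * ((2 * j + 2).choose (i + j + 1 - a) : ℚ) := by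
    have h := Nat.add_choose_eq (2 * i + 1) (2 * j + 2) (i + j + 1)
    rw [Finset.Nat.sum_antidiagonal_eq_sum_range_succ_mk] at h
    have e : 2 * i + 1 + (2 * j + 2) = 2 * (i + j) + 3 := by ring
    rw [e] at h
    have hc := congrArg (Nat.cast : ℕ → ℚ) h
    push_cast at hc
    exact hc
  rw [hV]
  -- split the RHS sum
  have hsplit : ∑ a ∈ range (i + j + 2), ((2 * i + 1).choose a : ℚ) * ((2 * j + 2).choose (i + j + 1 - a) : ℚ)
      = (∑ a ∈ range (i + 1), ((2 * i + 1).choose a : ℚ) * ((2 * j + 2).choose (i + j + 1 - a) : ℚ))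
        + ∑ m ∈ range (j + 1), ((2 * i + 1).choose (i + 1 + m) : ℚ) * ((2 * j + 2).choose (i + j + 1 - (i + 1 + m)) : ℚ) := by
    have h1 : (∑ a ∈ Ico 0 (i + 1), ((2 * i + 1).choose a : ℚ) * ((2 * j + 2).choose (i + j + 1 - a) : ℚ))
        + ∑ a ∈ Ico (i + 1) (i + j + 2), ((2 * i + 1).choose a : ℚ) * ((2 * j + 2).choose (i + j + 1 - a) : ℚ)
        = ∑ a ∈ Ico 0 (i + j + 2), ((2 * i + 1).choose a : ℚ) * ((2 * j + 2).choose (i + j + 1 - a) : ℚ) :=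
      Finset.sum_Ico_consecutive _ (by omega) (by omega)
    rw [← range_eq_Ico, ← range_eq_Ico] at h1
    rw [← h1, Finset.sum_Ico_eq_sum_range, show i + j + 2 - (i + 1) = j + 1 from by omega]
  rw [hsplit]
  -- S1 : reflect and symmetrize
  have hS1 : ∑ a ∈ range (i + 1), ((2 * i + 1).choose a : ℚ) * ((2 * j + 2).choose (i + j + 1 - a) : ℚ)
      = ∑ k ∈ range (i + 1), (if k ≤ j + 1 then ((2 * i + 1).choose (i - k) : ℚ) * ((2 * j + 2).choose (j + 1 - k) : ℚ) else 0) := by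
    rw [← Finset.sum_range_reflect (fun a => ((2 * i + 1).choose a : ℚ) * ((2 * j + 2).choose (i + j + 1 - a) : ℚ)) (i + 1)]
    apply Finset.sum_congr rfl
    intro k hk
    simp only [mem_range, Nat.lt_succ_iff] at hk
    have e1 : i + 1 - 1 - k = i - k := by omega
    rw [e1]
    have e2 : i + j + 1 - (i - k) = j + 1 + k := by omega
    rw [e2]
    by_cases hkj : k ≤ j + 1
    · rw [if_pos hkj]
      congr 2
      have hle : j + 1 + k ≤ 2 * j + 2 := by omega
      have := Nat.choose_symm hle
      rw [show 2 * j + 2 - (j + 1 + k) = j + 1 - k from by omega] at this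
      omega
    · rw [if_neg hkj]
      have : 2 * j + 2 < j + 1 + k := by omega
      rw [Nat.choose_eq_zero_of_lt this]
      push_cast
      ring
  -- S2 : symmetrize then swap guard
  have hS2 : ∑ m ∈ range (j + 1), ((2 * i + 1).choose (i + 1 + m) : ℚ) * ((2 * j + 2).choose (i + j + 1 - (i + 1 + m)) : ℚ)
      = ∑ k ∈ range (i + 1), (if k ≤ j then ((2 * i + 1).choose (i - k) : ℚ) * ((2 * j + 2).choose (j - k) : ℚ) else 0) := by
    have hstep : ∀ m ∈ range (j + 1), ((2 * i + 1).choose (i + 1 + m) : ℚ) * ((2 * j + 2).choose (i + j + 1 - (i + 1 + m)) : ℚ)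
        = (if m ≤ i then ((2 * i + 1).choose (i - m) : ℚ) * ((2 * j + 2).choose (j - m) : ℚ) else 0) := by
      intro m hm
      simp only [mem_range, Nat.lt_succ_iff] at hm
      have e3 : i + j + 1 - (i + 1 + m) = j - m := by omega
      rw [e3]
      by_cases hmi : m ≤ i
      · rw [if_pos hmi]
        congr 2
        have hle : i + 1 + m ≤ 2 * i + 1 := by omega
        have := Nat.choose_symm hle
        rw [show 2 * i + 1 - (i + 1 + m) = i - m from by omega] at this
        omega
      · rw [if_neg hmi]
        have : 2 * i + 1 < i + 1 + m := by omega
        rw [Nat.choose_eq_zero_of_lt this]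
        push_cast
        ring
    rw [Finset.sum_congr rfl hstep]
    exact (sum_guard_symm j i _).trans rfl |>.symm ▸ (sum_guard_symm j i fun m => ((2 * i + 1).choose (i - m) : ℚ) * ((2 * j + 2).choose (j - m) : ℚ))
  rw [hS1, hS2, ← Finset.sum_add_distrib]
  -- per-term Pascal
  apply Finset.sum_congr rfl
  intro k hk
  simp only [mem_range, Nat.lt_succ_iff] at hk
  rw [te]
  by_cases hkj : k ≤ j
  · rw [if_pos (by omega : k ≤ j + 1), if_pos (by omega : k ≤ j + 1), if_pos hkj]
    have hp : (2 * j + 3).choose (j + 1 - k) = (2 * j + 2).choose (j - k) + (2 * j + 2).choose (j + 1 - k) := by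
      have e : j + 1 - k = (j - k) + 1 := by omega
      rw [e, show 2 * j + 3 = (2 * j + 2) + 1 from by ring]
      exact Nat.choose_succ_succ' (2 * j + 2) (j - k)
    rw [hp]
    push_cast
    ring
  · by_cases hkj1 : k ≤ j + 1
    · have hk1 : k = j + 1 := by omega
      rw [if_pos hkj1, if_pos hkj1, if_neg hkj, hk1]
      rw [show j + 1 - (j + 1) = 0 from by omega]
      simp
    · rw [if_neg hkj1, if_neg hkj1, if_neg hkj]
      ring



noncomputable def Asum (k : ℕ) : ℚ := ∑ s ∈ range (k + 1), ((k + 2 + s).choose s : ℚ) * 2 ^ (k - s)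
noncomputable def Bsum (k : ℕ) : ℚ := ∑ s ∈ range (k + 1), ((k + 3 + s).choose s : ℚ) * 2 ^ (k - s)

lemma BA (k : ℕ) : Bsum k = 2 * Asum k - ((2 * k + 3).choose k : ℚ) := by
  have hA' : Asum k = (∑ r ∈ range k, ((k + 3 + r).choose (r + 1) : ℚ) * 2 ^ (k - 1 - r)) + 2 ^ k := by
    rw [Asum, Finset.sum_range_succ']
    congr 1
    · apply Finset.sum_congr rfl
      intro r hr
      simp only [mem_range] at hr
      rw [show k + 2 + (r + 1) = k + 3 + r from by omega, show k - (r + 1) = k - 1 - r from by omega]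
    · norm_num
  have hB' : Bsum k = (∑ r ∈ range k,
      (((k + 3 + r).choose r : ℚ) + ((k + 3 + r).choose (r + 1) : ℚ)) * 2 ^ (k - 1 - r)) + 2 ^ k := by
    rw [Bsum, Finset.sum_range_succ']
    congr 1
    · apply Finset.sum_congr rfl
      intro r hr
      simp only [mem_range] at hr
      rw [show k + 3 + (r + 1) = (k + 3 + r) + 1 from by omega,
        Nat.choose_succ_succ' (k + 3 + r) r, show k - (r + 1) = k - 1 - r from by omega]
      push_cast
      ring
    · norm_num
  have hdiff : Bsum k - Asum k = ∑ r ∈ range k, ((k + 3 + r).choose r : ℚ) * 2 ^ (k - 1 - r) := by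
    rw [hA', hB']
    rw [show ∀ x y : ℚ, ∀ s1 s2 : ℚ, s1 + x - (s2 + y) = s1 - s2 + (x - y) from by intros; ring]
    simp only [sub_self, add_zero]
    rw [← Finset.sum_sub_distrib]
    apply Finset.sum_congr rfl
    intro r hr
    ring
  have hlast : Bsum k = (∑ r ∈ range k, ((k + 3 + r).choose r : ℚ) * 2 ^ (k - r)) + ((2 * k + 3).choose k : ℚ) := by
    rw [Bsum, Finset.sum_range_succ, show k + 3 + k = 2 * k + 3 from by omega, Nat.sub_self, pow_zero, mul_one]
  have hdouble : ∑ r ∈ range k, ((k + 3 + r).choose r : ℚ) * 2 ^ (k - r)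
      = 2 * ∑ r ∈ range k, ((k + 3 + r).choose r : ℚ) * 2 ^ (k - 1 - r) := by
    rw [Finset.mul_sum]
    apply Finset.sum_congr rfl
    intro r hr
    simp only [mem_range] at hr
    rw [show k - r = (k - 1 - r) + 1 from by omega, pow_succ]
    ring
  rw [hdouble, ← hdiff] at hlast
  linarith

lemma AB (k : ℕ) : Asum (k + 1) = 2 * Bsum k + ((2 * k + 4).choose (k + 1) : ℚ) := by
  rw [Asum, Finset.sum_range_succ, show k + 1 + 2 + (k + 1) = 2 * k + 4 from by omega,
    Nat.sub_self, pow_zero, mul_one]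
  congr 1
  rw [Bsum, Finset.mul_sum]
  apply Finset.sum_congr rfl
  intro s hs
  simp only [mem_range] at hs
  rw [show k + 1 + 2 + s = k + 3 + s from by omega, show k + 1 - s = (k - s) + 1 from by omega, pow_succ]
  ring

lemma Aval (k : ℕ) : Asum k = 4 ^ (k + 1) - ((2 * k + 3).choose (k + 1) : ℚ) := by
  induction k with
  | zero =>
      rw [Asum]
      norm_num [Finset.sum_range_one, Nat.choose_one_right]
  | succ k ih =>
      rw [AB k, BA k, ih]
      have P1 : ((2 * k + 4).choose (k + 1) : ℚ) = ((2 * k + 3).choose k : ℚ) + ((2 * k + 3).choose (k + 1) : ℚ) := by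
        have := Nat.choose_succ_succ' (2 * k + 3) k
        rw [show (2 * k + 3) + 1 = 2 * k + 4 from by omega] at this
        exact_mod_cast congrArg (Nat.cast : ℕ → ℚ) this
      have P2 : ((2 * k + 5).choose (k + 2) : ℚ) = ((2 * k + 4).choose (k + 1) : ℚ) + ((2 * k + 4).choose (k + 2) : ℚ) := by
        have := Nat.choose_succ_succ' (2 * k + 4) (k + 1)
        rw [show (2 * k + 4) + 1 = 2 * k + 5 from by omega] at this
        exact_mod_cast congrArg (Nat.cast : ℕ → ℚ) this
      have P3 : ((2 * k + 4).choose (k + 2) : ℚ) = ((2 * k + 3).choose (k + 1) : ℚ) + ((2 * k + 3).choose (k + 2) : ℚ) := by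
        have := Nat.choose_succ_succ' (2 * k + 3) (k + 1)
        rw [show (2 * k + 3) + 1 = 2 * k + 4 from by omega] at this
        exact_mod_cast congrArg (Nat.cast : ℕ → ℚ) this
      have P4 : ((2 * k + 3).choose (k + 2) : ℚ) = ((2 * k + 3).choose (k + 1) : ℚ) := by
        have h := Nat.choose_symm (show k + 2 ≤ 2 * k + 3 from by omega)
        rw [show 2 * k + 3 - (k + 2) = k + 1 from by omega] at h
        exact_mod_cast (congrArg (Nat.cast : ℕ → ℚ) h).symm
      have e1 : 2 * (k + 1) + 3 = 2 * k + 5 := by ring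
      have e2 : 2 * (k + 1) + 4 = 2 * k + 6 := by ring
      rw [e1]
      have e4 : (4 : ℚ) ^ (k + 1 + 1) = 4 * 4 ^ (k + 1) := by ring
      rw [e4]
      linarith [P1, P2, P3, P4]

lemma evalA (k : ℕ) : (a k).eval 2 = 4 ^ (k + 1) - ((2 * k + 3).choose (k + 1) : ℚ) := by
  rw [← Aval k]
  rw [a]
  rw [Polynomial.eval_finset_sum]
  simp only [Polynomial.eval_mul, Polynomial.eval_C, Polynomial.eval_pow, Polynomial.eval_X]
  rw [Asum, ← Finset.sum_range_reflect (fun s => ((k + 2 + s).choose s : ℚ) * 2 ^ (k - s)) (k + 1)]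
  apply Finset.sum_congr rfl
  intro m hm
  simp only [mem_range, Nat.lt_succ_iff] at hm
  rw [show k + 2 + (k + 1 - 1 - m) = 2 * k + 2 - m from by omega,
    show k + 1 - 1 - m = k - m from by omega, show k - (k - m) = m from by omega]


lemma sumRUfull (n j : ℕ) (hj : j ≤ n) :
    ∑ t ∈ range (n + 1), re t * ue t j = 4 * 4 ^ j := by
  have hshrink : ∑ t ∈ range (n + 1), re t * ue t j = ∑ t ∈ range (j + 1), re t * ue t j := by
    symm
    apply Finset.sum_subset
    · exact Finset.range_subset_range.2 (by omega)
    · intro t _ ht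
      simp only [mem_range, Nat.lt_succ_iff] at ht
      rw [ue_zero (by omega), mul_zero]
  rw [hshrink, sumRUrange j, pow_succ]
  ring

end HK

theorem stmt_8 (n : ℕ) :
    (Matrix.of fun i j : Fin (n + 1) =>
        (4 : ℚ) ^ (i.val + j.val + 1) - ((2 * (i.val + j.val) + 3).choose (i.val + j.val + 1) : ℚ)).det
      = (-1) ^ n * (2 * (n : ℚ) ^ 2 + 4 * (n : ℚ) + 1) ∧
    (H n).eval 2 = (-1) ^ n * (2 * (n : ℚ) ^ 2 + 4 * (n : ℚ) + 1) := by
  classical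
  set Nn : Matrix (Fin (n + 1)) (Fin (n + 1)) ℚ :=
    Matrix.of fun i j : Fin (n + 1) => ((2 * (i.val + j.val) + 3).choose (i.val + j.val + 1) : ℚ) with hNn
  set Xn : Matrix (Fin (n + 1)) (Fin (n + 1)) ℚ := Matrix.of fun i k : Fin (n + 1) => HK.xe i.val k.val with hXn
  set Tn : Matrix (Fin (n + 1)) (Fin (n + 1)) ℚ := Matrix.of fun k j : Fin (n + 1) => HK.te k.val j.val with hTn
  set Ln : Matrix (Fin (n + 1)) (Fin (n + 1)) ℚ := Matrix.of fun k t : Fin (n + 1) => HK.lel k.val t.val with hLn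
  set Un : Matrix (Fin (n + 1)) (Fin (n + 1)) ℚ := Matrix.of fun k j : Fin (n + 1) => HK.ue k.val j.val with hUn
  set ucol : Matrix (Fin (n + 1)) (Fin 1) ℚ := Matrix.of fun i _ => (4 : ℚ) ^ i.val with hucol
  set urow : Matrix (Fin 1) (Fin (n + 1)) ℚ := Matrix.of fun _ j => 4 * (4 : ℚ) ^ j.val with hurow
  set onec : Matrix (Fin (n + 1)) (Fin 1) ℚ := Matrix.of (fun _ _ => (1 : ℚ)) with honec
  set vcol : Matrix (Fin (n + 1)) (Fin 1) ℚ := Matrix.of fun k _ => HK.ve k.val with hvcol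
  set rrow : Matrix (Fin 1) (Fin (n + 1)) ℚ := Matrix.of fun _ t => HK.re t.val with hrrow
  set piv : Matrix (Fin 1) (Fin 1) ℚ :=
    Matrix.of fun _ _ => -(2 * (n : ℚ) ^ 2 + 4 * n + 1) / (2 * (n : ℚ) + 3) with hpiv
  have h2n3 : (2 * (n : ℚ) + 3) ≠ 0 := HK.twot3 n
  -- entrywise identities
  have hXT : Xn * Tn = Nn := by
    ext i j
    simp only [hXn, hTn, hNn, Matrix.mul_apply, Matrix.of_apply]
    rw [Fin.sum_univ_eq_sum_range (fun k => HK.xe i.val k * HK.te k j.val) (n + 1)]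
    exact HK.sumXT n i.val j.val (by omega)
  have hX1 : Xn * onec = ucol := by
    ext i z
    simp only [hXn, honec, hucol, Matrix.mul_apply, Matrix.of_apply, mul_one]
    rw [Fin.sum_univ_eq_sum_range (fun k => HK.xe i.val k) (n + 1)]
    exact HK.sumX1 n i.val (by omega)
  have hLU : Ln * Un = Tn := by
    ext k j
    simp only [hLn, hUn, hTn, Matrix.mul_apply, Matrix.of_apply]
    rw [Fin.sum_univ_eq_sum_range (fun t => HK.lel k.val t * HK.ue t j.val) (n + 1)]
    exact HK.sumLU n k.val j.val (by omega)
  have hLv : Ln * vcol = onec := by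
    ext k z
    simp only [hLn, hvcol, honec, Matrix.mul_apply, Matrix.of_apply]
    rw [Fin.sum_univ_eq_sum_range (fun t => HK.lel k.val t * HK.ve t) (n + 1)]
    exact HK.sumLv n k.val (by omega)
  have hRU : rrow * Un = urow := by
    ext z j
    simp only [hrrow, hUn, hurow, Matrix.mul_apply, Matrix.of_apply]
    rw [Fin.sum_univ_eq_sum_range (fun t => HK.re t * HK.ue t j.val) (n + 1)]
    exact HK.sumRUfull n j.val (by omega)
  have hRV : rrow * vcol + piv = (1 : Matrix (Fin 1) (Fin 1) ℚ) := by
    ext z w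
    have hz : z = 0 := Subsingleton.elim _ _
    have hw : w = 0 := Subsingleton.elim _ _
    subst hz; subst hw
    simp only [hrrow, hvcol, hpiv, Matrix.add_apply, Matrix.mul_apply, Matrix.of_apply,
      Matrix.one_apply_eq]
    rw [Fin.sum_univ_eq_sum_range (fun t => HK.re t * HK.ve t) (n + 1), HK.sumRV n]
    field_simp
    ring
  -- factorization
  have hinner : (Matrix.fromBlocks Ln 0 rrow 1) * (Matrix.fromBlocks Un vcol 0 piv)
      = Matrix.fromBlocks Tn onec urow (1 : Matrix (Fin 1) (Fin 1) ℚ) := by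
    rw [Matrix.fromBlocks_multiply]
    simp only [Matrix.zero_mul, Matrix.mul_zero, Matrix.one_mul, add_zero, zero_add]
    rw [hLU, hLv, hRU, hRV]
  have houter : (Matrix.fromBlocks Xn 0 0 1) * (Matrix.fromBlocks Tn onec urow (1 : Matrix (Fin 1) (Fin 1) ℚ))
      = Matrix.fromBlocks Nn ucol urow (1 : Matrix (Fin 1) (Fin 1) ℚ) := by
    rw [Matrix.fromBlocks_multiply]
    simp only [Matrix.zero_mul, Matrix.mul_zero, Matrix.one_mul, add_zero, zero_add]
    rw [hXT, hX1]
  -- determinants of the factors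
  have hdetX : Xn.det = 1 := by
    have htri : Xn.BlockTriangular ⇑OrderDual.toDual := by
      intro i j hij
      have : (i.val : ℕ) < j.val := hij
      simp only [hXn, Matrix.of_apply, HK.xe]
      rw [if_neg (by omega)]
    rw [Matrix.det_of_lowerTriangular Xn htri]
    have hone : ∀ i : Fin (n + 1), Xn i i = 1 := by
      intro i
      simp only [hXn, Matrix.of_apply, HK.xe]
      rw [if_pos (le_refl _), Nat.sub_self, Nat.choose_zero_right]
      norm_num
    rw [Finset.prod_congr rfl (fun i _ => hone i)]
    simp
  have hdetL : Ln.det = 1 := by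
    have htri : Ln.BlockTriangular ⇑OrderDual.toDual := by
      intro k t hkt
      have : (k.val : ℕ) < t.val := hkt
      simp only [hLn, Matrix.of_apply, HK.lel]
      rw [if_neg (by omega), if_neg (by omega)]
      norm_num
    rw [Matrix.det_of_lowerTriangular Ln htri]
    have hone : ∀ k : Fin (n + 1), Ln k k = 1 := by
      intro k
      simp only [hLn, Matrix.of_apply, HK.lel]
      rw [if_neg (show ¬ (k.val + 1 = k.val) by omega)]
      norm_num
    rw [Finset.prod_congr rfl (fun i _ => hone i)]
    simp
  have hdetU : Un.det = 2 * (n : ℚ) + 3 := by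
    have htri : Un.BlockTriangular id := by
      intro k j hkj
      have : (j.val : ℕ) < k.val := hkj
      simp only [hUn, Matrix.of_apply]
      exact HK.ue_zero (by omega)
    rw [Matrix.det_of_upperTriangular htri]
    have hdg : ∀ k : Fin (n + 1), Un k k = (2 * (k.val : ℚ) + 3) / (2 * (k.val : ℚ) + 1) := by
      intro k
      simp only [hUn, Matrix.of_apply]
      exact HK.ue_diag k.val
    rw [Finset.prod_congr rfl (fun k _ => hdg k)]
    rw [Fin.prod_univ_eq_prod_range (fun k => (2 * (k : ℚ) + 3) / (2 * (k : ℚ) + 1)) (n + 1)]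
    exact HK.prodd n
  have hdetpiv : piv.det = -(2 * (n : ℚ) ^ 2 + 4 * n + 1) / (2 * (n : ℚ) + 3) := by
    rw [Matrix.det_fin_one]
    rfl
  -- determinant of the big block matrix
  have hbig : (Matrix.fromBlocks Nn ucol urow (1 : Matrix (Fin 1) (Fin 1) ℚ)).det
      = -(2 * (n : ℚ) ^ 2 + 4 * n + 1) := by
    rw [← houter, ← hinner, Matrix.det_mul, Matrix.det_mul]
    rw [Matrix.det_fromBlocks_zero₂₁, Matrix.det_fromBlocks_zero₁₂, Matrix.det_fromBlocks_zero₂₁]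
    rw [hdetX, hdetL, hdetU, hdetpiv, Matrix.det_one]
    field_simp
  -- Schur complement
  have hSchur := Matrix.det_fromBlocks_one₂₂ Nn ucol urow
  -- the target matrix
  have hM : (Matrix.of fun i j : Fin (n + 1) =>
        (4 : ℚ) ^ (i.val + j.val + 1) - ((2 * (i.val + j.val) + 3).choose (i.val + j.val + 1) : ℚ))
      = -(Nn - ucol * urow) := by
    ext i j
    simp only [hNn, hucol, hurow, Matrix.neg_apply, Matrix.sub_apply, Matrix.mul_apply,
      Matrix.of_apply, Fin.sum_univ_one]
    have e : (4 : ℚ) ^ (i.val + j.val + 1) = 4 ^ i.val * (4 * 4 ^ j.val) := by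
      rw [pow_succ, pow_add]
      ring
    rw [e]
    ring
  have hpart1 : (Matrix.of fun i j : Fin (n + 1) =>
        (4 : ℚ) ^ (i.val + j.val + 1) - ((2 * (i.val + j.val) + 3).choose (i.val + j.val + 1) : ℚ)).det
      = (-1) ^ n * (2 * (n : ℚ) ^ 2 + 4 * (n : ℚ) + 1) := by
    rw [hM, Matrix.det_neg, Fintype.card_fin, ← hSchur, hbig, pow_succ]
    ring
  refine ⟨hpart1, ?_⟩
  -- part 2 : evaluation of the Hankel determinant of polynomials
  have hHm : (H n).eval 2 = (Matrix.of fun i j : Fin (n + 1) =>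
      (4 : ℚ) ^ (i.val + j.val + 1) - ((2 * (i.val + j.val) + 3).choose (i.val + j.val + 1) : ℚ)).det := by
    rw [H]
    have hmap := RingHom.map_det (Polynomial.evalRingHom (2 : ℚ))
      (Matrix.of fun i j : Fin (n + 1) => a (i.val + j.val))
    simp only [Polynomial.coe_evalRingHom] at hmap
    rw [hmap]
    congr 1
    ext i j
    simp only [RingHom.mapMatrix_apply, Matrix.map_apply, Matrix.of_apply,
      Polynomial.coe_evalRingHom]
    exact HK.evalA (i.val + j.val)
  rw [hHm]
  exact hpart1
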